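/- Let V be a finite nontrivial Boolean ring with cardinality 2^N. Then there are exactly N ring homomorphisms from V to ℤ/2ℤ. -/

import Mathlib

section aux

/-- In a Boolean ring, `1 + 1 = 0`. -/
private lemma bool_two_eq_zero {W : Type*} [CommRing W] (hB : ∀ x : W, x * x = x) :
    (1 : W) + 1 = 0 := by
  linear_combination hB ((1 : W) + 1)

/-- A finite Boolean ring has cardinality a power of two. -/
private lemma bool_card_pow {W : Type*} [CommRing W] [Fintype W]
    (hB : ∀ x : W, x * x = x) : ∃ k : ℕ, Fintype.card W = 2 ^ k := by
  haveI : Module (ZMod 2) W := AddCommGroup.zmodModule (n := 2) (by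
    intro x
    have h2 : (1 : W) + 1 = 0 := bool_two_eq_zero hB
    rw [two_nsmul]
    linear_combination x * h2)
  refine ⟨Module.finrank (ZMod 2) W, ?_⟩
  have := Module.card_eq_pow_finrank (K := ZMod 2) (V := W)
  simpa using this

/-- Ring homs out of a product into `ZMod 2` form a sum type. -/
private noncomputable def homsProdEquiv (A B : Type*) [CommRing A] [CommRing B] :
    ((A →+* ZMod 2) ⊕ (B →+* ZMod 2)) ≃ ((A × B) →+* ZMod 2) := by
  have hz : ∀ u : ZMod 2, u = 0 ∨ u = 1 := by decide
  refine Equiv.ofBijective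
    (Sum.elim (fun f => f.comp (RingHom.fst A B)) (fun g => g.comp (RingHom.snd A B))) ⟨?_, ?_⟩
  · rintro (f | f) (g | g) h
    · congr 1
      ext a
      exact congrArg (fun F => F (a, 0)) h
    · exfalso
      have := congrArg (fun F => F ((1 : A), (0 : B))) h
      simp at this
    · exfalso
      have := congrArg (fun F => F ((1 : A), (0 : B))) h
      simp at this
    · congr 1
      ext b
      exact congrArg (fun F => F (0, b)) h
  · intro F
    have hsum : F (1, 0) + F (0, 1) = 1 := by
      rw [← map_add]
      norm_num
      exact map_one F
    rcases hz (F (1, 0)) with h10 | h10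
    · -- F factors through the second component
      have h01 : F (0, 1) = 1 := by rw [h10, zero_add] at hsum; exact hsum
      refine ⟨Sum.inr
        { toFun := fun b => F (0, b)
          map_one' := h01
          map_mul' := fun b b' => by
            rw [← map_mul]
            congr 1
            simp
          map_zero' := by exact map_zero F
          map_add' := fun b b' => by
            rw [← map_add]
            congr 1
            simp }, ?_⟩
      ext ⟨a, b⟩
      have hsplit : F (a, b) = F (a, 0) + F (0, b) := by
        rw [← map_add]
        congr 1
        simp
      have ha0 : F (a, 0) = 0 := by
        have : F (a, 0) = F (1, 0) * F (a, 0) := by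
          rw [← map_mul]
          congr 1
          simp
        rw [this, h10, zero_mul]
      simp [hsplit, ha0]
    · -- F factors through the first component
      have h01 : F (0, 1) = 0 := by
        rcases hz (F (0, 1)) with h | h
        · exact h
        · rw [h10, h] at hsum
          norm_num at hsum
          exact absurd hsum (by decide)
      refine ⟨Sum.inl
        { toFun := fun a => F (a, 0)
          map_one' := h10
          map_mul' := fun a a' => by
            rw [← map_mul]
            congr 1
            simp
          map_zero' := by exact map_zero F
          map_add' := fun a a' => by
            rw [← map_add]
            congr 1
            simp }, ?_⟩
      ext ⟨a, b⟩
      have hsplit : F (a, b) = F (a, 0) + F (0, b) := by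
        rw [← map_add]
        congr 1
        simp
      have hb0 : F (0, b) = 0 := by
        have : F (0, b) = F (0, 1) * F (0, b) := by
          rw [← map_mul]
          congr 1
          simp
        rw [this, h01, zero_mul]
      simp [hsplit, hb0]

/-- An idempotent generating the unit ideal is `1`. -/
private lemma span_ne_top {W : Type*} [CommRing W] {f : W} (hf : f * f = f) (hne : f ≠ 1) :
    Ideal.span {f} ≠ ⊤ := by
  intro htop
  have h1 : f ∣ 1 := Ideal.mem_span_singleton.mp (htop ▸ Submodule.mem_top)
  obtain ⟨c, hc⟩ := h1
  apply hne
  calc f = f * 1 := (mul_one f).symm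
    _ = f * (f * c) := by rw [← hc]
    _ = (f * f) * c := by ring
    _ = f * c := by rw [hf]
    _ = 1 := hc.symm

private lemma card_homs_aux (N : ℕ) : ∀ (V : Type u) [CommRing V] [Fintype V] [Nontrivial V],
    (∀ x : V, x * x = x) → Fintype.card V = 2 ^ N → Nat.card (V →+* ZMod 2) = N := by
  induction N using Nat.strong_induction_on with
  | _ N ih =>
    intro V _ _ _ hB hcard
    have hVge : 2 ≤ Fintype.card V := Fintype.one_lt_card
    have hN1 : 1 ≤ N := by
      by_contra h
      push_neg at h
      interval_cases N
      simp [hcard] at hVge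
    by_cases hN : N = 1
    · -- base case: V ≃ ZMod 2
      subst hN
      have hc2 : Fintype.card V = 2 := by simpa using hcard
      have e : ZMod 2 ≃+* V := ZMod.ringEquivOfPrime V Nat.prime_two hc2
      have hx01 : ∀ x : V, x = 0 ∨ x = 1 := by
        intro x
        have : ∀ u : ZMod 2, u = 0 ∨ u = 1 := by decide
        rcases this (e.symm x) with h | h
        · left
          have := congrArg e h
          simpa using this
        · right
          have := congrArg e h
          simpa using this
      rw [Nat.card_eq_one_iff_unique]
      constructor
      · constructor
        intro f g
        ext x
        rcases hx01 x with rfl | rfl <;> simp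
      · exact ⟨(e.symm : V →+* ZMod 2)⟩
    · -- inductive step: split off an idempotent
      have hN2 : 2 ≤ N := by omega
      -- find a nontrivial idempotent
      have hVgt : 2 < Fintype.card V := by
        rw [hcard]
        calc 2 < 4 := by norm_num
          _ = 2 ^ 2 := by norm_num
          _ ≤ 2 ^ N := Nat.pow_le_pow_right (by norm_num) hN2
      obtain ⟨e, he0, he1⟩ : ∃ e : V, e ≠ 0 ∧ e ≠ 1 := by
        by_contra h
        push_neg at h
        haveI := Classical.decEq V
        have hsub : (Finset.univ : Finset V) ⊆ ({0, 1} : Finset V) := by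
          intro x _
          rcases eq_or_ne x 0 with rfl | hx
          · simp
          · simp [h x hx]
        have hle : Fintype.card V ≤ 2 := by
          calc Fintype.card V = Finset.univ.card := rfl
            _ ≤ ({0, 1} : Finset V).card := Finset.card_le_card hsub
            _ ≤ 2 := by simpa using Finset.card_insert_le (0 : V) ({1} : Finset V)
        omega
      set I := Ideal.span {e} with hI
      set J := Ideal.span {1 - e} with hJ
      have hco : IsCoprime I J := by
        rw [Ideal.isCoprime_iff_exists]
        exact ⟨e, Ideal.subset_span rfl, 1 - e, Ideal.subset_span rfl, by ring⟩
      have hbot : I ⊓ J = ⊥ := by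
        rw [eq_bot_iff]
        intro x hx
        obtain ⟨hxI, hxJ⟩ := hx
        obtain ⟨a, ha⟩ := Ideal.mem_span_singleton.mp hxI
        obtain ⟨b, hb⟩ := Ideal.mem_span_singleton.mp hxJ
        have h1 : x * e = x := by
          rw [ha]
          linear_combination a * hB e
        have h2 : x * e = 0 := by
          rw [hb]
          linear_combination (-b) * hB e
        rw [Ideal.mem_bot, ← h1, h2]
      have hItop : I ≠ ⊤ := span_ne_top (hB e) he1
      have hJtop : J ≠ ⊤ := span_ne_top (hB (1 - e)) (by
        intro h
        apply he0
        linear_combination -h)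
      haveI : Nontrivial (V ⧸ I) := Ideal.Quotient.nontrivial_iff.mpr hItop
      haveI : Nontrivial (V ⧸ J) := Ideal.Quotient.nontrivial_iff.mpr hJtop
      haveI : Finite (V ⧸ I) := Quotient.finite _
      haveI : Finite (V ⧸ J) := Quotient.finite _
      haveI fA : Fintype (V ⧸ I) := Fintype.ofFinite _
      haveI fB : Fintype (V ⧸ J) := Fintype.ofFinite _
      have hBA : ∀ x : V ⧸ I, x * x = x := by
        intro x
        obtain ⟨y, rfl⟩ := Ideal.Quotient.mk_surjective x
        rw [← map_mul, hB]
      have hBB : ∀ x : V ⧸ J, x * x = x := by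
        intro x
        obtain ⟨y, rfl⟩ := Ideal.Quotient.mk_surjective x
        rw [← map_mul, hB]
      obtain ⟨a, ha⟩ := bool_card_pow hBA
      obtain ⟨b, hb⟩ := bool_card_pow hBB
      -- the ring isomorphism with the product
      have Φ : V ≃+* (V ⧸ I) × (V ⧸ J) :=
        ((RingEquiv.quotientBot V).symm.trans (Ideal.quotEquivOfEq hbot.symm)).trans
          (Ideal.quotientInfEquivQuotientProd I J hco)
      have hcards : 2 ^ (a + b) = 2 ^ N := by
        rw [pow_add, ← ha, ← hb, ← Fintype.card_prod, ← hcard]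
        exact (Fintype.card_congr Φ.toEquiv).symm
      have habN : a + b = N := Nat.pow_right_injective (le_refl 2) hcards
      have ha1 : 1 ≤ a := by
        have : 2 ≤ Fintype.card (V ⧸ I) := Fintype.one_lt_card
        rw [ha] at this
        by_contra h
        push_neg at h
        interval_cases a <;> omega
      have hb1 : 1 ≤ b := by
        have : 2 ≤ Fintype.card (V ⧸ J) := Fintype.one_lt_card
        rw [hb] at this
        by_contra h
        push_neg at h
        interval_cases b <;> omega
      have hIH_A : Nat.card ((V ⧸ I) →+* ZMod 2) = a := ih a (by omega) _ hBA ha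
      have hIH_B : Nat.card ((V ⧸ J) →+* ZMod 2) = b := ih b (by omega) _ hBB hb
      haveI : Finite ((V ⧸ I) →+* ZMod 2) :=
        Finite.of_injective (fun f => (f : (V ⧸ I) → ZMod 2)) DFunLike.coe_injective
      haveI : Finite ((V ⧸ J) →+* ZMod 2) :=
        Finite.of_injective (fun f => (f : (V ⧸ J) → ZMod 2)) DFunLike.coe_injective
      have key : Nat.card (V →+* ZMod 2)
          = Nat.card (((V ⧸ I) × (V ⧸ J)) →+* ZMod 2) := by
        refine Nat.card_congr ⟨fun f => f.comp Φ.symm.toRingHom, fun g => g.comp Φ.toRingHom,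
          fun f => ?_, fun g => ?_⟩
        · ext x
          simp
        · ext x
          simp
      rw [key, ← Nat.card_congr (homsProdEquiv (V ⧸ I) (V ⧸ J)), Nat.card_sum, hIH_A, hIH_B,
        habN]

end aux

/-- A finite nontrivial Boolean ring of cardinality `2 ^ N` admits
exactly `N` ring homomorphisms to `ℤ/2ℤ`. -/
theorem card_homs_eq (V : Type*) [CommRing V] [Fintype V] [Nontrivial V]
    (hB : ∀ x : V, x * x = x) (N : ℕ) (hcard : Fintype.card V = 2 ^ N) :
    Nat.card (V →+* ZMod 2) = N := by
  exact card_homs_aux N V hB hcard
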